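/- arXiv:1607.08731 — 3 statements merged into one kernel-verified Lean document; each statement's English description precedes it below -/
import Mathlib

section
/- Let S_α be a random variable with Sibuya distribution of parameter α ∈ (0,1), i.e. with probability generating function E[t^{S_α}] = 1 − (1−t)^α for t ∈ [0,1]. Then for every x > 0, lim_{α↓0} P(α log S_α ≤ x) = 1 − e^{−x}. -/
open MeasureTheory ProbabilityTheory Filter

section SibuyaAux
variable {Ω : Type*} [MeasureSpace Ω] [IsProbabilityMeasure (ℙ : Measure Ω)]

lemma sib_aux_int (T : Ω → ℕ) (hT : Measurable T) (t : ℝ) (ht0 : 0 ≤ t) (ht1 : t ≤ 1) :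
    Integrable (fun ω => t ^ T ω) (ℙ : Measure Ω) := by
  refine (integrable_const (1:ℝ)).mono' (measurable_const.pow hT).aestronglyMeasurable ?_
  filter_upwards with ω
  rw [Real.norm_eq_abs, abs_of_nonneg (pow_nonneg ht0 _)]
  exact pow_le_one₀ ht0 ht1

lemma sib_aux_lb (T : Ω → ℕ) (hT : Measurable T) (t : ℝ) (ht0 : 0 ≤ t) (ht1 : t ≤ 1) (n : ℕ) :
    t ^ n * (ℙ {ω | T ω ≤ n}).toReal ≤ ∫ ω, t ^ T ω := by
  have hA : MeasurableSet {ω | T ω ≤ n} := hT (MeasurableSet.of_discrete (s := {m | m ≤ n}))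
  have h1 : (∫ ω, Set.indicator {ω | T ω ≤ n} (fun _ => t ^ n) ω) =
      (ℙ {ω | T ω ≤ n}).toReal • t ^ n := integral_indicator_const _ hA
  rw [mul_comm, ← smul_eq_mul, ← h1]
  refine integral_mono ?_ (sib_aux_int T hT t ht0 ht1) ?_
  · exact (integrable_const (t ^ n)).indicator hA
  · intro ω
    by_cases h : T ω ≤ n
    · have hm : ω ∈ {ω | T ω ≤ n} := h
      simp only [Set.indicator_of_mem hm]
      exact pow_le_pow_of_le_one ht0 ht1 h
    · have hm : ω ∉ {ω | T ω ≤ n} := h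
      simp only [Set.indicator_of_notMem hm]
      exact pow_nonneg ht0 _

lemma sib_aux_ub (T : Ω → ℕ) (hT : Measurable T) (t : ℝ) (ht0 : 0 ≤ t) (ht1 : t ≤ 1) (n : ℕ) :
    (∫ ω, t ^ T ω) ≤ (ℙ {ω | T ω ≤ n}).toReal + t ^ n := by
  have hA : MeasurableSet {ω | T ω ≤ n} := hT (MeasurableSet.of_discrete (s := {m | m ≤ n}))
  have h1 : (∫ ω, (Set.indicator {ω | T ω ≤ n} (fun _ => (1:ℝ)) ω + t ^ n)) =
      (ℙ {ω | T ω ≤ n}).toReal + t ^ n := by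
    rw [integral_add ((integrable_const (1:ℝ)).indicator hA) (integrable_const _),
      integral_indicator_const _ hA, integral_const]
    simp [measure_univ, measureReal_def]
  rw [← h1]
  refine integral_mono (sib_aux_int T hT t ht0 ht1) ?_ ?_
  · exact ((integrable_const (1:ℝ)).indicator hA).add (integrable_const _)
  · intro ω
    by_cases h : T ω ≤ n
    · have hm : ω ∈ {ω | T ω ≤ n} := h
      simp only [Set.indicator_of_mem hm]
      have : t ^ T ω ≤ 1 := pow_le_one₀ ht0 ht1
      nlinarith [pow_nonneg ht0 n]
    · have hm : ω ∉ {ω | T ω ≤ n} := h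
      simp only [Set.indicator_of_notMem hm]
      push_neg at h
      have := pow_le_pow_of_le_one ht0 ht1 h.le
      simpa using this

end SibuyaAux

noncomputable def sibN (x α : ℝ) : ℕ := ⌊Real.exp (x / α)⌋₊

lemma sib_hdiv (x : ℝ) (hx : 0 < x) :
    Tendsto (fun α : ℝ => x / α) (nhdsWithin 0 (Set.Ioo 0 1)) atTop := by
  have h : Tendsto (fun α : ℝ => α⁻¹) (nhdsWithin 0 (Set.Ioo 0 1)) atTop :=
    tendsto_inv_nhdsGT_zero.mono_left (nhdsWithin_mono _ Set.Ioo_subset_Ioi_self)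
  simpa [div_eq_mul_inv] using h.const_mul_atTop hx

lemma sib_hNRtop (x : ℝ) (hx : 0 < x) :
    Tendsto (fun α : ℝ => (sibN x α : ℝ)) (nhdsWithin 0 (Set.Ioo 0 1)) atTop :=
  tendsto_natCast_atTop_atTop.comp
    (tendsto_nat_floor_atTop.comp (Real.tendsto_exp_atTop.comp (sib_hdiv x hx)))

lemma sib_hlogNtop (x : ℝ) (hx : 0 < x) :
    Tendsto (fun α : ℝ => Real.log (sibN x α)) (nhdsWithin 0 (Set.Ioo 0 1)) atTop :=
  Real.tendsto_log_atTop.comp (sib_hNRtop x hx)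

lemma sib_halogalpha :
    Tendsto (fun α : ℝ => α * Real.log α) (nhdsWithin 0 (Set.Ioo 0 1)) (nhds 0) := by
  have h2 : Tendsto (fun α : ℝ => Real.log α * α ^ (1:ℝ)) (nhdsWithin 0 (Set.Ioo 0 1)) (nhds 0) :=
    (tendsto_log_mul_rpow_nhdsGT_zero zero_lt_one).mono_left
      (nhdsWithin_mono _ Set.Ioo_subset_Ioi_self)
  refine h2.congr' ?_
  filter_upwards [self_mem_nhdsWithin] with α hα
  rw [Real.rpow_one, mul_comm]

lemma sib_hL1 (x : ℝ) (hx : 0 < x) :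
    Tendsto (fun α : ℝ => α * Real.log (sibN x α)) (nhdsWithin 0 (Set.Ioo 0 1)) (nhds x) := by
  set l := nhdsWithin (0:ℝ) (Set.Ioo 0 1) with hl
  have hα0 : Tendsto (fun α : ℝ => α) l (nhds 0) := tendsto_nhdsWithin_of_tendsto_nhds tendsto_id
  have hexp0 : Tendsto (fun α : ℝ => Real.exp (-(x / α))) l (nhds 0) :=
    Real.tendsto_exp_atBot.comp (tendsto_neg_atBot_iff.mpr (sib_hdiv x hx))
  have hlog1 : Tendsto (fun α : ℝ => Real.log (1 - Real.exp (-(x / α)))) l (nhds 0) := by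
    have : Tendsto (fun α : ℝ => 1 - Real.exp (-(x / α))) l (nhds 1) := by
      simpa using (tendsto_const_nhds (x := (1:ℝ)) (f := l)).sub hexp0
    simpa [Function.comp_def] using (Real.continuousAt_log one_ne_zero).tendsto.comp this
  have hg : Tendsto (fun α : ℝ => x + α * Real.log (1 - Real.exp (-(x / α)))) l (nhds x) := by
    simpa using (tendsto_const_nhds (x := x) (f := l)).add (hα0.mul hlog1)
  refine tendsto_of_tendsto_of_tendsto_of_le_of_le' hg tendsto_const_nhds ?_ ?_
  · filter_upwards [self_mem_nhdsWithin,
      (sib_hdiv x hx).eventually_ge_atTop 1] with α hα hge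
    have hαpos : (0:ℝ) < α := hα.1
    have hepos : (0:ℝ) < Real.exp (x / α) := Real.exp_pos _
    have he1 : (1:ℝ) ≤ Real.exp (x / α) := by
      rw [← Real.exp_zero]; exact Real.exp_le_exp.mpr (by linarith)
    have hfac : Real.exp (x / α) - 1 = Real.exp (x / α) * (1 - Real.exp (-(x / α))) := by
      rw [mul_sub, mul_one, ← Real.exp_add]; simp
    have hfloor : Real.exp (x / α) - 1 < (sibN x α : ℝ) := Nat.sub_one_lt_floor _
    have hepos2 : (0:ℝ) < 1 - Real.exp (-(x / α)) := by
      have : Real.exp (-(x / α)) < 1 := by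
        rw [← Real.exp_zero]
        have hxa : 0 < x / α := div_pos hx hαpos
        exact Real.exp_lt_exp.mpr (by linarith)
      linarith
    have hN0 : (0:ℝ) < sibN x α := by
      have : (2:ℝ) - 1 ≤ Real.exp (x / α) - 1 := by
        have : (2:ℝ) ≤ Real.exp 1 := by
          have := Real.add_one_le_exp (1:ℝ); linarith
        have h2 := Real.exp_le_exp.mpr hge
        linarith
      linarith
    have hloglt : x / α + Real.log (1 - Real.exp (-(x / α))) ≤ Real.log (sibN x α) := by
      have h1 : Real.log (Real.exp (x / α) - 1) ≤ Real.log (sibN x α) := by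
        refine Real.log_le_log (by nlinarith) hfloor.le
      rw [hfac, Real.log_mul (Real.exp_pos _).ne' hepos2.ne', Real.log_exp] at h1
      exact h1
    calc x + α * Real.log (1 - Real.exp (-(x / α)))
        = α * (x / α + Real.log (1 - Real.exp (-(x / α)))) := by field_simp
      _ ≤ α * Real.log (sibN x α) := mul_le_mul_of_nonneg_left hloglt hαpos.le
  · filter_upwards [self_mem_nhdsWithin] with α hα
    have hαpos : (0:ℝ) < α := hα.1
    have : (sibN x α : ℝ) ≤ Real.exp (x / α) := Nat.floor_le (Real.exp_pos _).le
    have hN0 : (0:ℝ) < sibN x α := by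
      have he1 : (1:ℝ) ≤ Real.exp (x / α) := by
        rw [← Real.exp_zero]
        exact Real.exp_le_exp.mpr (div_pos hx hαpos).le
      exact_mod_cast Nat.cast_pos.mpr (Nat.floor_pos.mpr he1)
    have hlogle : Real.log (sibN x α) ≤ x / α := (Real.log_le_iff_le_exp hN0).mpr this
    calc α * Real.log (sibN x α) ≤ α * (x / α) := mul_le_mul_of_nonneg_left hlogle hαpos.le
      _ = x := by field_simp

lemma sib_hL2 (x : ℝ) (hx : 0 < x) :
    Tendsto (fun α : ℝ => α * Real.log (Real.log (sibN x α))) (nhdsWithin 0 (Set.Ioo 0 1))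
      (nhds 0) := by
  set l := nhdsWithin (0:ℝ) (Set.Ioo 0 1) with hl
  have hα0 : Tendsto (fun α : ℝ => α) l (nhds 0) := tendsto_nhdsWithin_of_tendsto_nhds tendsto_id
  have h1 : Tendsto (fun α : ℝ => α * Real.log (α * Real.log (sibN x α))) l (nhds 0) := by
    have hlogc : Tendsto (fun α : ℝ => Real.log (α * Real.log (sibN x α))) l
        (nhds (Real.log x)) := ((Real.continuousAt_log hx.ne').tendsto).comp (sib_hL1 x hx)
    simpa using hα0.mul hlogc
  have h2 := h1.sub sib_halogalpha
  rw [sub_zero] at h2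
  refine h2.congr' ?_
  filter_upwards [self_mem_nhdsWithin, (sib_hlogNtop x hx).eventually_gt_atTop 0] with α hα hlogN
  have hαpos : (0:ℝ) < α := hα.1
  rw [← mul_sub, Real.log_mul hαpos.ne' hlogN.ne']
  ring

/-- If `S α` has a Sibuya distribution with parameter `α ∈ (0,1)`, i.e. its probability
generating function is `E[t^{S α}] = 1 - (1-t)^α` for `t ∈ [0,1]`, then for every `x > 0`,
`ℙ(α log S_α ≤ x) → 1 - e^{-x}` as `α ↓ 0`. -/
theorem stmt10 {Ω : Type*} [MeasureSpace Ω] [IsProbabilityMeasure (ℙ : Measure Ω)]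
    (S : ℝ → Ω → ℕ) (hmeas : ∀ α, Measurable (S α))
    (hpos : ∀ α ω, 1 ≤ S α ω)
    (hpgf : ∀ α ∈ Set.Ioo (0 : ℝ) 1, ∀ t ∈ Set.Icc (0 : ℝ) 1,
      (∫ ω, t ^ (S α ω)) = 1 - (1 - t) ^ α)
    (x : ℝ) (hx : 0 < x) :
    Tendsto (fun α : ℝ => (ℙ {ω | α * Real.log (S α ω) ≤ x}).toReal)
      (nhdsWithin 0 (Set.Ioo 0 1)) (nhds (1 - Real.exp (-x))) := by
  set l := nhdsWithin (0:ℝ) (Set.Ioo 0 1) with hl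
  have hα0 : Tendsto (fun α : ℝ => α) l (nhds 0) := tendsto_nhdsWithin_of_tendsto_nhds tendsto_id
  -- rewrite the event
  have hev : ∀ᶠ α in l, (ℙ {ω | α * Real.log (S α ω) ≤ x}).toReal
      = (ℙ {ω | S α ω ≤ sibN x α}).toReal := by
    filter_upwards [self_mem_nhdsWithin] with α hα
    have hset : {ω : Ω | α * Real.log (S α ω) ≤ x} = {ω | S α ω ≤ sibN x α} := by
      ext ω
      have h1 : (1:ℝ) ≤ (S α ω : ℝ) := by exact_mod_cast hpos α ω
      simp only [Set.mem_setOf_eq]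
      rw [show (α * Real.log (S α ω) ≤ x) ↔ (Real.log (S α ω) ≤ x / α) from by
          rw [mul_comm, ← le_div_iff₀ hα.1],
        Real.log_le_iff_le_exp (by linarith : (0:ℝ) < (S α ω : ℝ))]
      exact ⟨fun h => Nat.le_floor h,
        fun h => le_trans (Nat.cast_le.mpr h) (Nat.floor_le (Real.exp_pos _).le)⟩
    rw [hset]
  rw [tendsto_congr' hev]
  -- limits of the squeeze bounds
  have hcore1 : Tendsto (fun α : ℝ => α * Real.log (Real.log (sibN x α))
      - α * Real.log (sibN x α)) l (nhds (-x)) := by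
    have h := (sib_hL2 x hx).sub (sib_hL1 x hx)
    rw [zero_sub] at h
    exact h
  have hrlow : Tendsto (fun α : ℝ => (Real.log (sibN x α) / (sibN x α)) ^ α) l
      (nhds (Real.exp (-x))) := by
    refine ((Real.continuous_exp.tendsto _).comp hcore1).congr' ?_
    filter_upwards [self_mem_nhdsWithin, (sib_hlogNtop x hx).eventually_gt_atTop 0,
      (sib_hNRtop x hx).eventually_gt_atTop 0] with α hα hlogN hN
    simp only [Function.comp_apply]
    rw [Real.rpow_def_of_pos (div_pos hlogN hN), Real.log_div hlogN.ne' hN.ne', mul_comm]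
    ring_nf
  have hcore2 : Tendsto (fun α : ℝ => α * Real.log α - α * Real.log (sibN x α)) l
      (nhds (-x)) := by
    have h := sib_halogalpha.sub (sib_hL1 x hx)
    rw [zero_sub] at h
    exact h
  have hrup : Tendsto (fun α : ℝ => (α / (sibN x α)) ^ α) l (nhds (Real.exp (-x))) := by
    refine ((Real.continuous_exp.tendsto _).comp hcore2).congr' ?_
    filter_upwards [self_mem_nhdsWithin, (sib_hNRtop x hx).eventually_gt_atTop 0] with α hα hN
    simp only [Function.comp_apply]
    rw [Real.rpow_def_of_pos (div_pos hα.1 hN), Real.log_div hα.1.ne' hN.ne', mul_comm]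
    ring_nf
  have hinvN : Tendsto (fun α : ℝ => ((sibN x α : ℝ))⁻¹) l (nhds 0) :=
    tendsto_inv_atTop_zero.comp (sib_hNRtop x hx)
  have hlowF : Tendsto (fun α : ℝ => 1 - (Real.log (sibN x α) / (sibN x α)) ^ α
      - ((sibN x α : ℝ))⁻¹) l (nhds (1 - Real.exp (-x))) := by
    simpa using ((tendsto_const_nhds (x := (1:ℝ)) (f := l)).sub hrlow).sub hinvN
  have hupF : Tendsto (fun α : ℝ => (1 - (α / (sibN x α)) ^ α) / (1 - α)) l
      (nhds (1 - Real.exp (-x))) := by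
    have hden : Tendsto (fun α : ℝ => 1 - α) l (nhds 1) := by
      simpa using (tendsto_const_nhds (x := (1:ℝ)) (f := l)).sub hα0
    have := ((tendsto_const_nhds (x := (1:ℝ)) (f := l)).sub hrup).div hden one_ne_zero
    simpa [Pi.div_def] using this
  refine tendsto_of_tendsto_of_tendsto_of_le_of_le' hlowF hupF ?_ ?_
  · -- lower bound
    filter_upwards [self_mem_nhdsWithin, (sib_hNRtop x hx).eventually_ge_atTop 3,
      (sib_hlogNtop x hx).eventually_ge_atTop 1] with α hα hN3 hlog1
    set n := sibN x α with hn
    have hNpos : (0:ℝ) < (n:ℝ) := by linarith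
    have hlogpos : (0:ℝ) < Real.log n := by linarith
    have hloglt : Real.log n < (n:ℝ) := by
      have := Real.log_le_sub_one_of_pos hNpos
      linarith
    set u := Real.log n / (n:ℝ) with hu
    have hu0 : 0 < u := div_pos hlogpos hNpos
    have hu1 : u < 1 := (div_lt_one hNpos).mpr hloglt
    have ht0 : (0:ℝ) ≤ 1 - u := by linarith
    have ht1 : (1:ℝ) - u ≤ 1 := by linarith
    have hint := hpgf α hα (1 - u) ⟨ht0, ht1⟩
    have hub := sib_aux_ub (S α) (hmeas α) (1 - u) ht0 ht1 n
    rw [hint] at hub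
    have h1u : (1:ℝ) - (1 - u) = u := by ring
    rw [h1u] at hub
    -- (1-u)^n ≤ n⁻¹
    have htn : (1 - u) ^ n ≤ ((n:ℝ))⁻¹ := by
      have h1 : 1 - u ≤ Real.exp (-u) := by
        have := Real.add_one_le_exp (-u); linarith
      have h2 : (1 - u) ^ n ≤ Real.exp (-u) ^ n := pow_le_pow_left₀ ht0 h1 n
      have h3 : Real.exp (-u) ^ n = Real.exp ((n:ℝ) * (-u)) := (Real.exp_nat_mul _ n).symm
      have h4 : (n:ℝ) * (-u) = -Real.log n := by
        rw [hu]; field_simp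
      rw [h3, h4, Real.exp_neg, Real.exp_log hNpos] at h2
      exact h2
    linarith
  · -- upper bound
    filter_upwards [self_mem_nhdsWithin, (sib_hNRtop x hx).eventually_ge_atTop 3] with α hα hN3
    set n := sibN x α with hn
    have hNpos : (0:ℝ) < (n:ℝ) := by linarith
    set v := α / (n:ℝ) with hv
    have hv0 : 0 < v := div_pos hα.1 hNpos
    have hv1 : v < 1 := by
      rw [hv, div_lt_one hNpos]
      linarith [hα.2]
    have ht0 : (0:ℝ) ≤ 1 - v := by linarith
    have ht1 : (1:ℝ) - v ≤ 1 := by linarith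
    have hint := hpgf α hα (1 - v) ⟨ht0, ht1⟩
    have hlb := sib_aux_lb (S α) (hmeas α) (1 - v) ht0 ht1 n
    rw [hint] at hlb
    have h1v : (1:ℝ) - (1 - v) = v := by ring
    rw [h1v] at hlb
    have hbern : 1 - α ≤ (1 - v) ^ n := by
      have := one_add_mul_le_pow (show (-2:ℝ) ≤ -v by linarith) n
      have hnv : 1 + (n:ℝ) * (-v) = 1 - α := by
        rw [hv]; field_simp; ring
      rw [hnv] at this
      rw [← sub_eq_add_neg] at this; exact this
    have hP0 : (0:ℝ) ≤ (ℙ {ω | S α ω ≤ n}).toReal := ENNReal.toReal_nonneg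
    have hαlt1 : (0:ℝ) < 1 - α := by linarith [hα.2]
    rw [le_div_iff₀ hαlt1]
    calc (ℙ {ω | S α ω ≤ n}).toReal * (1 - α)
        ≤ (ℙ {ω | S α ω ≤ n}).toReal * (1 - v) ^ n := by
          exact mul_le_mul_of_nonneg_left hbern hP0
      _ = (1 - v) ^ n * (ℙ {ω | S α ω ≤ n}).toReal := by ring
      _ ≤ 1 - v ^ α := hlb
end

section
/- If B_1, B_2, … are independent Bernoulli random variables with P(B_i = 1) = α/i, then S := min{n ∈ ℕ : B_n = 1} has Sibuya distribution with parameter α, i.e. E[t^S] = 1 − (1−t)^α for t ∈ [0,1]. -/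
open Filter Finset

section Analytic

variable {α : ℝ} (hα : α ∈ Set.Ioo (0:ℝ) 1) {q : ℕ → ℝ}
  (hq0 : q 0 = 1) (hqnn : ∀ n, 0 ≤ q n) (hqle : ∀ n, q n ≤ 1)
  (hrec : ∀ n : ℕ, ((n:ℝ)+1) * q (n+1) = ((n:ℝ)+1-α) * q n)

include hqnn hqle in
lemma sib_summable {t : ℝ} (ht : |t| < 1) : Summable (fun n => q n * t ^ n) := by
  apply Summable.of_norm_bounded (summable_geometric_of_lt_one (abs_nonneg t) ht)
  intro n
  rw [norm_mul, norm_pow, Real.norm_eq_abs, Real.norm_eq_abs, abs_of_nonneg (hqnn n)]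
  exact mul_le_of_le_one_left (by positivity) (hqle n)

include hqnn hqle in
lemma sib_hasDerivAt {t : ℝ} (ht : |t| < 1) :
    HasDerivAt (fun x => ∑' n, q n * x ^ n) (∑' n, q n * ((n:ℝ) * t ^ (n-1))) t := by
  set r : ℝ := (|t| + 1) / 2 with hr
  have hr0 : 0 < r := by positivity
  have hrlt : r < 1 := by rw [hr]; linarith
  have htr : |t| < r := by rw [hr]; linarith
  have hu : Summable (fun n : ℕ => (n:ℝ) * r ^ (n-1)) := by
    rw [← summable_nat_add_iff 1]
    simp only [Nat.add_sub_cancel]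
    have h1 : Summable (fun n : ℕ => ((n:ℝ)^1) * r ^ n) :=
      summable_pow_mul_geometric_of_norm_lt_one 1 (by rwa [Real.norm_eq_abs, abs_of_nonneg hr0.le])
    have h2 : Summable (fun n : ℕ => r ^ n) := summable_geometric_of_lt_one hr0.le hrlt
    exact (h1.add h2).congr (fun n => by push_cast; ring)
  refine hasDerivAt_tsum_of_isPreconnected hu (isOpen_Ioo (a := -r) (b := r))
    (convex_Ioo _ _).isPreconnected (fun n y _ => ((hasDerivAt_pow n y).const_mul (q n)))
    (fun n y hy => ?_) (by simp [hr0] : (0:ℝ) ∈ Set.Ioo (-r) r) ?_ (by simpa [abs_lt] using htr)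
  · have hyr : |y| ≤ r := by
      rw [abs_le]; exact ⟨hy.1.le, hy.2.le⟩
    rw [Real.norm_eq_abs, abs_mul, abs_mul, Nat.abs_cast, abs_of_nonneg (hqnn n), abs_pow]
    calc q n * (n * |y| ^ (n-1)) ≤ 1 * ((n:ℝ) * r ^ (n-1)) := by
          apply mul_le_mul (hqle n) _ (by positivity) zero_le_one
          exact mul_le_mul_of_nonneg_left (pow_le_pow_left₀ (abs_nonneg y) hyr _) (Nat.cast_nonneg n)
      _ = (n:ℝ) * r ^ (n-1) := one_mul _
  · exact (sib_summable hqnn hqle (t := 0) (by simp)).congr (fun n => by ring)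

include hα hq0 hqnn hqle hrec in
lemma sib_tsum_eq {t : ℝ} (ht0 : 0 ≤ t) (ht : t < 1) :
    ∑' n, q n * t ^ n = (1 - t) ^ (α - 1) := by
  obtain ⟨hα0, hα1⟩ := hα
  -- derivative series summability
  have sD : ∀ x : ℝ, |x| < 1 → Summable (fun n => q n * ((n:ℝ) * x ^ (n-1))) := by
    intro x hx
    have hu : Summable (fun n : ℕ => (n:ℝ) * |x| ^ (n-1)) := by
      rw [← summable_nat_add_iff 1]
      simp only [Nat.add_sub_cancel]
      have h1 : Summable (fun n : ℕ => ((n:ℝ)^1) * |x| ^ n) :=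
        summable_pow_mul_geometric_of_norm_lt_one 1 (by
          rwa [Real.norm_eq_abs, abs_abs])
      have h2 : Summable (fun n : ℕ => |x| ^ n) := summable_geometric_of_lt_one (abs_nonneg x) hx
      exact (h1.add h2).congr (fun n => by push_cast; ring)
    apply Summable.of_norm_bounded hu
    intro n
    rw [Real.norm_eq_abs, abs_mul, abs_mul, Nat.abs_cast, abs_of_nonneg (hqnn n), abs_pow]
    exact mul_le_of_le_one_left (by positivity) (hqle n)
  -- the derivative relation
  have hrel : ∀ x : ℝ, |x| < 1 →
      (1 - x) * (∑' n, q n * ((n:ℝ) * x ^ (n-1))) = (1 - α) * ∑' n, q n * x ^ n := by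
    intro x hx
    have hD := sD x hx
    have hshift : Summable (fun n : ℕ => q (n+1) * (((n:ℕ)+1 : ℝ) * x ^ n)) := by
      have := (summable_nat_add_iff 1).2 hD
      refine this.congr (fun n => ?_)
      simp [Nat.add_sub_cancel]
    have hDshift : (∑' n, q n * ((n:ℝ) * x ^ (n-1)))
        = ∑' n : ℕ, q (n+1) * (((n:ℕ)+1 : ℝ) * x ^ n) := by
      rw [Summable.tsum_eq_zero_add hD]
      simp [Nat.add_sub_cancel]
    have htD : Summable (fun n : ℕ => q n * (n:ℝ) * x ^ n) := by
      refine (hD.mul_left x).congr (fun n => ?_)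
      cases n with
      | zero => simp
      | succ m => simp only [Nat.add_sub_cancel]; push_cast; ring
    have htD' : x * (∑' n, q n * ((n:ℝ) * x ^ (n-1))) = ∑' n, q n * (n:ℝ) * x ^ n := by
      rw [← tsum_mul_left]
      refine tsum_congr (fun n => ?_)
      cases n with
      | zero => simp
      | succ m => simp only [Nat.add_sub_cancel]; push_cast; ring
    have key : (∑' n : ℕ, q (n+1) * (((n:ℕ)+1 : ℝ) * x ^ n)) - (∑' n, q n * (n:ℝ) * x ^ n)
        = (1 - α) * ∑' n, q n * x ^ n := by
      rw [← Summable.tsum_sub hshift htD, ← tsum_mul_left]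
      refine tsum_congr (fun n => ?_)
      have h := hrec n
      have : q (n+1) * (((n:ℕ)+1 : ℝ)) = ((n:ℝ)+1-α) * q n := by linarith [hrec n]
      calc q (n+1) * (((n:ℕ)+1 : ℝ) * x ^ n) - q n * (n:ℝ) * x ^ n
          = (q (n+1) * (((n:ℕ)+1 : ℝ)) - q n * (n:ℝ)) * x ^ n := by ring
        _ = ((1-α) * q n) * x ^ n := by rw [this]; ring
        _ = (1-α) * (q n * x ^ n) := by ring
    calc (1 - x) * (∑' n, q n * ((n:ℝ) * x ^ (n-1)))
        = (∑' n, q n * ((n:ℝ) * x ^ (n-1))) - x * (∑' n, q n * ((n:ℝ) * x ^ (n-1))) := by ring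
      _ = (∑' n : ℕ, q (n+1) * (((n:ℕ)+1 : ℝ) * x ^ n)) - (∑' n, q n * (n:ℝ) * x ^ n) := by
          rw [htD', hDshift]
      _ = (1 - α) * ∑' n, q n * x ^ n := key
  -- h has zero derivative
  set G : ℝ → ℝ := fun x => ∑' n, q n * x ^ n with hG
  set h : ℝ → ℝ := fun x => (1 - x) ^ (1 - α) * G x with hh
  have hderiv : ∀ x : ℝ, 0 ≤ x → x < 1 → HasDerivAt h 0 x := by
    intro x hx0 hx1
    have hxabs : |x| < 1 := by rw [abs_of_nonneg hx0]; exact hx1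
    have h1x : (0:ℝ) < 1 - x := by linarith
    have hGd : HasDerivAt G (∑' n, q n * ((n:ℝ) * x ^ (n-1))) x :=
      sib_hasDerivAt hqnn hqle hxabs
    have hsub : HasDerivAt (fun y : ℝ => 1 - y) (-1) x := (hasDerivAt_id x).const_sub 1
    have hA : HasDerivAt (fun y : ℝ => (1 - y) ^ (1 - α))
        ((1 - α) * (1 - x) ^ (1 - α - 1) * (-1)) x := by
      exact (Real.hasDerivAt_rpow_const (Or.inl h1x.ne')).comp x hsub
    have := hA.mul hGd
    refine HasDerivAt.congr_deriv this ?_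
    have e1 : (1 - x) ^ (1 - α - 1) = (1 - x) ^ (-α) := by norm_num
    have e2 : (1 - x) ^ (1 - α) = (1 - x) * (1 - x) ^ (-α) := by
      rw [show (1:ℝ) - α = 1 + (-α) by ring, Real.rpow_add h1x, Real.rpow_one]
    rw [e1, e2]
    have hx' := hrel x hxabs
    linear_combination ((1 - x) ^ (-α)) * hx'
  -- constancy
  have hcon : ∀ x ∈ Set.Icc (0:ℝ) t, h x = h 0 := by
    apply constant_of_has_deriv_right_zero
    · intro x hx
      exact ((hderiv x hx.1 (lt_of_le_of_lt hx.2 ht)).continuousAt).continuousWithinAt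
    · intro x hx
      exact (hderiv x hx.1 (lt_of_lt_of_le hx.2 ht.le)).hasDerivWithinAt
  have hG0 : G 0 = 1 := by
    simp only [hG]
    rw [tsum_eq_single 0 (fun n hn => by simp [zero_pow hn])]
    simp [hq0]
  have h1t : (0:ℝ) < 1 - t := by linarith
  have hne : (1 - t) ^ (1 - α) ≠ 0 := (Real.rpow_pos_of_pos h1t _).ne'
  have hht : (1 - t) ^ (1 - α) * G t = 1 := by
    have hc := hcon t ⟨ht0, le_rfl⟩
    simp only [hh] at hc
    rw [hc, hG0, sub_zero, Real.one_rpow, mul_one]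
  have hGt : G t = ((1 - t) ^ (1 - α))⁻¹ := by
    field_simp
    linear_combination hht
  have hfin : G t = (1 - t) ^ (α - 1) := by
    rw [hGt, ← Real.rpow_neg h1t.le]
    congr 1
    ring
  simpa only [hG] using hfin


include hα hq0 hqnn hqle hrec in
lemma sib_sum (hdec : ∀ n, q (n+1) ≤ q n) (htend : Filter.Tendsto q atTop (nhds 0))
    {t : ℝ} (ht0 : 0 ≤ t) (ht1 : t ≤ 1) :
    ∑' n : ℕ, (q n - q (n+1)) * t ^ (n+1) = 1 - (1 - t) ^ α := by
  obtain ⟨hα0, hα1⟩ := hα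
  rcases eq_or_lt_of_le ht1 with rfl | ht
  · -- t = 1
    have hnn : ∀ n : ℕ, 0 ≤ (q n - q (n+1)) * (1:ℝ) ^ (n+1) := by
      intro n; simp [sub_nonneg.2 (hdec n)]
    have hps : Filter.Tendsto (fun N => ∑ n ∈ range N, (q n - q (n+1)) * (1:ℝ) ^ (n+1))
        atTop (nhds 1) := by
      have : ∀ N, ∑ n ∈ range N, (q n - q (n+1)) * (1:ℝ) ^ (n+1) = q 0 - q N := by
        intro N
        simp only [one_pow, mul_one]
        exact Finset.sum_range_sub' q N
      simp only [this, hq0]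
      simpa using (tendsto_const_nhds (x := (1:ℝ))).sub htend
    have := (hasSum_iff_tendsto_nat_of_nonneg hnn 1).2 hps
    rw [this.tsum_eq, show (1:ℝ) - 1 = 0 by ring, Real.zero_rpow hα0.ne', sub_zero]
  · -- t < 1
    have habs : |t| < 1 := by rw [abs_of_nonneg ht0]; exact ht
    have h1t : (0:ℝ) < 1 - t := by linarith
    have sq : Summable (fun n => q n * t ^ n) := sib_summable hqnn hqle habs
    have sqs : Summable (fun n : ℕ => q (n+1) * t ^ (n+1)) := (summable_nat_add_iff (f := fun n => q n * t ^ n) 1).2 sq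
    have hsplit : ∑' n : ℕ, (q n - q (n+1)) * t ^ (n+1)
        = (∑' n : ℕ, q n * t ^ n * t) - ∑' n : ℕ, q (n+1) * t ^ (n+1) := by
      rw [← Summable.tsum_sub (sq.mul_right t) sqs]
      refine tsum_congr (fun n => ?_)
      rw [pow_succ]; ring
    have h1 : ∑' n : ℕ, q n * t ^ n * t = t * ∑' n, q n * t ^ n := by
      rw [tsum_mul_right]; ring
    have h2 : ∑' n : ℕ, q (n+1) * t ^ (n+1) = (∑' n, q n * t ^ n) - 1 := by
      have := Summable.tsum_eq_zero_add sq
      rw [this, hq0]; simp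
    rw [hsplit, h1, h2, sib_tsum_eq ⟨hα0, hα1⟩ hq0 hqnn hqle hrec ht0 ht]
    have : (1 - t) * (1 - t) ^ (α - 1) = (1 - t) ^ α := by
      rw [show α = 1 + (α - 1) by ring, Real.rpow_add h1t, Real.rpow_one]
      ring_nf
    nlinarith [this]

end Analytic
-- conversion Icc 1 n ↔ range n
lemma sib_prod_Icc (f : ℕ → ENNReal) (n : ℕ) :
    ∏ i ∈ Finset.Icc 1 n, f i = ∏ i ∈ Finset.range n, f (i+1) := by
  induction n with
  | zero => simp
  | succ m ih => rw [Finset.prod_Icc_succ_top (Nat.le_add_left 1 m), ih, Finset.prod_range_succ]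

lemma sib_prod_Icc' (f : ℕ → ℝ) (n : ℕ) :
    ∏ i ∈ Finset.Icc 1 n, f i = ∏ i ∈ Finset.range n, f (i+1) := by
  induction n with
  | zero => simp
  | succ m ih => rw [Finset.prod_Icc_succ_top (Nat.le_add_left 1 m), ih, Finset.prod_range_succ]

noncomputable def sibq (α : ℝ) (n : ℕ) : ℝ := ∏ i ∈ Finset.range n, (1 - α / (i+1))

section sibqfacts

variable {α : ℝ} (hα : α ∈ Set.Ioo (0:ℝ) 1)

include hα in
lemma sibq_fac_mem (i : ℕ) : 0 < 1 - α / ((i:ℝ)+1) ∧ 1 - α / ((i:ℝ)+1) ≤ 1 := by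
  obtain ⟨h0, h1⟩ := hα
  have hi1 : (1:ℝ) ≤ (i:ℝ)+1 := by have := Nat.cast_nonneg (α := ℝ) i; linarith
  have h2 : α / ((i:ℝ)+1) ≤ α := div_le_self h0.le hi1
  have h3 : 0 < α / ((i:ℝ)+1) := by positivity
  exact ⟨by linarith, by linarith⟩

lemma sibq_zero : sibq α 0 = 1 := by simp [sibq]

lemma sibq_succ (n : ℕ) : sibq α (n+1) = sibq α n * (1 - α / ((n:ℝ)+1)) := by
  rw [sibq, Finset.prod_range_succ]; rfl

include hα in
lemma sibq_nonneg (n : ℕ) : 0 ≤ sibq α n :=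
  Finset.prod_nonneg (fun i _ => (sibq_fac_mem hα i).1.le)

include hα in
lemma sibq_le_one (n : ℕ) : sibq α n ≤ 1 :=
  Finset.prod_le_one (fun i _ => (sibq_fac_mem hα i).1.le) (fun i _ => (sibq_fac_mem hα i).2)

omit hα in
lemma sibq_rec (n : ℕ) : ((n:ℝ)+1) * sibq α (n+1) = ((n:ℝ)+1-α) * sibq α n := by
  rw [sibq_succ]
  have : ((n:ℝ)+1) ≠ 0 := by positivity
  field_simp

include hα in
lemma sibq_dec (n : ℕ) : sibq α (n+1) ≤ sibq α n := by
  rw [sibq_succ]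
  have h3 : 0 ≤ α / ((n:ℝ)+1) := by
    have := hα.1; positivity
  nlinarith [sibq_nonneg hα n]

include hα in
lemma sibq_tendsto : Tendsto (sibq α) atTop (nhds 0) := by
  have h0 := hα.1
  have hb : ∀ n, sibq α n ≤ Real.exp (-(α * ∑ i ∈ Finset.range n, (1:ℝ)/((i:ℝ)+1))) := by
    intro n
    have step : sibq α n ≤ ∏ i ∈ Finset.range n, Real.exp (-(α / ((i:ℝ)+1))) := by
      apply Finset.prod_le_prod (fun i _ => (sibq_fac_mem hα i).1.le)
      intro i _
      have := Real.add_one_le_exp (-(α / ((i:ℝ)+1)))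
      linarith
    calc sibq α n ≤ ∏ i ∈ Finset.range n, Real.exp (-(α / ((i:ℝ)+1))) := step
      _ = Real.exp (∑ i ∈ Finset.range n, -(α / ((i:ℝ)+1))) := (Real.exp_sum _ _).symm
      _ = Real.exp (-(α * ∑ i ∈ Finset.range n, (1:ℝ)/((i:ℝ)+1))) := by
          congr 1
          rw [Finset.mul_sum, ← Finset.sum_neg_distrib]
          exact Finset.sum_congr rfl (fun i _ => by ring)
  have hH : Tendsto (fun n => ∑ i ∈ Finset.range n, (1:ℝ)/((i:ℝ)+1)) atTop atTop :=
    Real.tendsto_sum_range_one_div_nat_succ_atTop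
  have hexp : Tendsto (fun n => Real.exp (-(α * ∑ i ∈ Finset.range n, (1:ℝ)/((i:ℝ)+1))))
      atTop (nhds 0) := by
    apply Real.tendsto_exp_atBot.comp
    rw [tendsto_neg_atBot_iff]
    exact hH.const_mul_atTop h0
  exact squeeze_zero (fun n => sibq_nonneg hα n) hb hexp

end sibqfacts

open MeasureTheory ProbabilityTheory

/-- If `B 1, B 2, …` are independent `{0,1}`-valued random variables with
`ℙ(B i = 1) = α / i`, and `S = min {n ≥ 1 : B n = 1}`, then `S` has a Sibuya distribution
with parameter `α`: `E[t^S] = 1 - (1-t)^α` for all `t ∈ [0,1]`. -/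
theorem stmt11 {Ω : Type*} [MeasureSpace Ω] [IsProbabilityMeasure (ℙ : Measure Ω)]
    (α : ℝ) (hα : α ∈ Set.Ioo (0 : ℝ) 1)
    (B : ℕ → Ω → ℕ) (hmeas : ∀ i, Measurable (B i))
    (h01 : ∀ i ω, B i ω ≤ 1)
    (hindep : iIndepFun B ℙ)
    (hp : ∀ i : ℕ, 1 ≤ i → ℙ {ω | B i ω = 1} = ENNReal.ofReal (α / i))
    (S : Ω → ℕ) (hS : ∀ ω, S ω = sInf {n | 1 ≤ n ∧ B n ω = 1}) :
    ∀ t ∈ Set.Icc (0 : ℝ) 1, (∫ ω, t ^ (S ω)) = 1 - (1 - t) ^ α := by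
  intro t ht
  have hα0 := hα.1
  have hα1 := hα.2
  set q : ℕ → ℝ := sibq α with hqdef
  have hms : ∀ (i c : ℕ), MeasurableSet (B i ⁻¹' {c}) :=
    fun i c => (hmeas i) (measurableSet_singleton c)
  have hBval : ∀ i ω, B i ω ≠ 1 → B i ω = 0 := by
    intro i ω h
    rcases Nat.le_one_iff_eq_zero_or_eq_one.mp (h01 i ω) with h0 | h1
    · exact h0
    · exact absurd h1 h
  have hp1 : ∀ i : ℕ, 1 ≤ i → ℙ (B i ⁻¹' {1}) = ENNReal.ofReal (α / i) := by
    intro i hi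
    exact hp i hi
  have hdiv0 : ∀ i : ℕ, 1 ≤ i → 0 ≤ α / (i:ℝ) := by
    intro i hi
    have : (0:ℝ) < i := by exact_mod_cast hi
    positivity
  have hp0 : ∀ i : ℕ, 1 ≤ i → ℙ (B i ⁻¹' {0}) = ENNReal.ofReal (1 - α / i) := by
    intro i hi
    have hc : B i ⁻¹' {0} = (B i ⁻¹' {1})ᶜ := by
      ext ω
      simp only [Set.mem_preimage, Set.mem_singleton_iff, Set.mem_compl_iff]
      constructor
      · intro h h1; rw [h] at h1; exact one_ne_zero h1.symm
      · exact hBval i ω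
    rw [hc, measure_compl (hms i 1) (measure_ne_top _ _), measure_univ, hp1 i hi,
      ← ENNReal.ofReal_one, ← ENNReal.ofReal_sub _ (hdiv0 i hi)]
  have hindep' := iIndepFun_iff_measure_inter_preimage_eq_mul.mp hindep
  have hprod : ∀ (n : ℕ) (c : ℕ → ℕ),
      ℙ (⋂ i ∈ Finset.Icc 1 n, B i ⁻¹' {c i}) = ∏ i ∈ Finset.Icc 1 n, ℙ (B i ⁻¹' {c i}) := by
    intro n c
    exact hindep' (Finset.Icc 1 n) (sets := fun i => {c i})
      (fun i _ => measurableSet_singleton (c i))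
  have hSn : ∀ n : ℕ, S ⁻¹' {n+1}
      = ⋂ i ∈ Finset.Icc 1 (n+1), B i ⁻¹' {if i = n+1 then 1 else 0} := by
    intro n
    ext ω
    simp only [Set.mem_preimage, Set.mem_singleton_iff, Set.mem_iInter]
    rw [hS ω]
    constructor
    · intro h i hi
      have hne : {k | 1 ≤ k ∧ B k ω = 1}.Nonempty := by
        by_contra hemp
        rw [Set.not_nonempty_iff_eq_empty] at hemp
        rw [hemp, Nat.sInf_empty] at h
        exact Nat.succ_ne_zero n h.symm
      have hmem := Nat.sInf_mem hne
      rw [h] at hmem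
      rcases Finset.mem_Icc.mp hi with ⟨hi1, hi2⟩
      by_cases hin : i = n+1
      · rw [if_pos hin, hin]; exact hmem.2
      · rw [if_neg hin]
        have hilt : i < n+1 := lt_of_le_of_ne hi2 hin
        rw [← h] at hilt
        have hni := Nat.notMem_of_lt_sInf hilt
        simp only [Set.mem_setOf_eq, not_and] at hni
        exact hBval i ω (hni hi1)
    · intro h
      have h1 : B (n+1) ω = 1 := by
        have := h (n+1) (Finset.mem_Icc.mpr ⟨Nat.le_add_left 1 n, le_rfl⟩)
        simpa using this
      have hmem : n+1 ∈ {k | 1 ≤ k ∧ B k ω = 1} := ⟨Nat.le_add_left 1 n, h1⟩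
      apply le_antisymm
      · exact Nat.sInf_le hmem
      · apply le_csInf ⟨_, hmem⟩
        intro m hm
        by_contra hlt
        push_neg at hlt
        have hm' := h m (Finset.mem_Icc.mpr ⟨hm.1, le_of_lt hlt⟩)
        rw [if_neg (Nat.ne_of_lt hlt)] at hm'
        rw [hm.2] at hm'
        exact one_ne_zero hm'
  have hq_ofprod : ∀ n : ℕ, ∏ i ∈ Finset.Icc 1 n, ℙ (B i ⁻¹' {0}) = ENNReal.ofReal (q n) := by
    intro n
    rw [sib_prod_Icc]
    calc ∏ i ∈ Finset.range n, ℙ (B (i+1) ⁻¹' {0})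
        = ∏ i ∈ Finset.range n, ENNReal.ofReal (1 - α/((i:ℝ)+1)) := by
          refine Finset.prod_congr rfl (fun i _ => ?_)
          rw [hp0 (i+1) (Nat.le_add_left 1 i)]
          push_cast
          ring_nf
      _ = ENNReal.ofReal (q n) := by
          rw [hqdef, sibq, ← ENNReal.ofReal_prod_of_nonneg (fun i _ => (sibq_fac_mem hα i).1.le)]
  have hPS : ∀ n : ℕ, ℙ (S ⁻¹' {n+1}) = ENNReal.ofReal (q n - q (n+1)) := by
    intro n
    rw [hSn n, hprod (n+1) (fun i => if i = n+1 then 1 else 0)]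
    rw [Finset.prod_Icc_succ_top (Nat.le_add_left 1 n)]
    have e1 : (∏ i ∈ Finset.Icc 1 n, ℙ (B i ⁻¹' {if i = n+1 then 1 else 0}))
        = ∏ i ∈ Finset.Icc 1 n, ℙ (B i ⁻¹' {0}) := by
      refine Finset.prod_congr rfl (fun i hi => ?_)
      rcases Finset.mem_Icc.mp hi with ⟨_, hi2⟩
      rw [if_neg (by omega)]
    rw [e1, hq_ofprod n, if_pos rfl, hp1 (n+1) (Nat.le_add_left 1 n),
      ← ENNReal.ofReal_mul (sibq_nonneg hα n)]
    congr 1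
    rw [hqdef]
    have hrec := sibq_succ (α := α) n
    push_cast
    rw [hrec]
    have hpos : ((n:ℝ)+1) ≠ 0 := by positivity
    field_simp
    ring
  have hS0set : S ⁻¹' {0} = ⋂ i : ℕ, B (i+1) ⁻¹' {0} := by
    ext ω
    simp only [Set.mem_preimage, Set.mem_singleton_iff, Set.mem_iInter]
    rw [hS ω]
    constructor
    · intro h i
      have hemp : {k | 1 ≤ k ∧ B k ω = 1} = ∅ := by
        rcases Nat.sInf_eq_zero.mp h with h' | h'
        · exact absurd h'.1 (by omega)
        · exact h'
      apply hBval
      intro h1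
      have : i+1 ∈ ({k | 1 ≤ k ∧ B k ω = 1} : Set ℕ) := ⟨Nat.le_add_left 1 i, h1⟩
      rw [hemp] at this
      exact this
    · intro h
      have hemp : {k | 1 ≤ k ∧ B k ω = 1} = ∅ := by
        ext k
        simp only [Set.mem_setOf_eq, Set.mem_empty_iff_false, iff_false, not_and]
        intro hk1 hk2
        obtain ⟨m, rfl⟩ := Nat.exists_eq_add_of_le hk1
        rw [Nat.add_comm] at hk2
        rw [h m] at hk2
        exact one_ne_zero hk2.symm
      rw [hemp, Nat.sInf_empty]
  have hPS0 : ℙ (S ⁻¹' {0}) = 0 := by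
    have hle : ∀ N, ℙ (S ⁻¹' {0}) ≤ ENNReal.ofReal (q N) := by
      intro N
      have hsub : S ⁻¹' {0} ⊆ ⋂ i ∈ Finset.Icc 1 N, B i ⁻¹' {(fun _ => 0) i} := by
        rw [hS0set]
        intro ω hω
        simp only [Set.mem_iInter] at hω ⊢
        intro i hi
        rcases Finset.mem_Icc.mp hi with ⟨hi1, _⟩
        obtain ⟨m, rfl⟩ := Nat.exists_eq_add_of_le hi1
        rw [Nat.add_comm]
        exact hω m
      calc ℙ (S ⁻¹' {0}) ≤ ℙ (⋂ i ∈ Finset.Icc 1 N, B i ⁻¹' {(fun _ => 0) i}) :=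
            measure_mono hsub
        _ = ENNReal.ofReal (q N) := by rw [hprod N (fun _ => 0)]; exact hq_ofprod N
    have htend0 : Filter.Tendsto (fun N => ENNReal.ofReal (q N)) Filter.atTop (nhds 0) := by
      have h1 := ENNReal.tendsto_ofReal (sibq_tendsto hα)
      simpa using h1
    exact le_zero_iff.mp (ge_of_tendsto' htend0 hle)
  have hSmeas : Measurable S := by
    apply measurable_to_countable'
    intro n
    match n with
    | 0 =>
      rw [hS0set]
      exact MeasurableSet.iInter (fun i => hms (i+1) 0)
    | (n+1) =>
      rw [hSn n]
      exact MeasurableSet.iInter fun i => MeasurableSet.iInter fun _ => hms i _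
  haveI hPmap : IsProbabilityMeasure (Measure.map S ℙ) :=
    Measure.isProbabilityMeasure_map hSmeas.aemeasurable
  have hmf : Measurable (fun n : ℕ => t ^ n) := measurable_from_top
  have hInt : Integrable (fun n : ℕ => t ^ n) (Measure.map S ℙ) := by
    apply Integrable.mono' (integrable_const (1:ℝ)) hmf.aestronglyMeasurable
    filter_upwards with n
    rw [Real.norm_eq_abs, abs_of_nonneg (pow_nonneg ht.1 n)]
    exact pow_le_one₀ ht.1 ht.2
  have hint1 : (∫ ω, t ^ S ω) = ∫ n, t ^ n ∂(Measure.map S ℙ) :=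
    (integral_map hSmeas.aemeasurable hmf.aestronglyMeasurable).symm
  rw [hint1, integral_countable' hInt]
  simp only [measureReal_def]
  have hterm : ∀ n : ℕ, ((Measure.map S ℙ) {n}).toReal • t ^ n
      = (ℙ (S ⁻¹' {n})).toReal * t ^ n := fun n => by
    rw [Measure.map_apply hSmeas (measurableSet_singleton n), smul_eq_mul]
  rw [tsum_congr hterm]
  have hf0 : (ℙ (S ⁻¹' {(0:ℕ)})).toReal * t ^ (0:ℕ) = 0 := by
    rw [hPS0]; simp
  have hfs : ∀ n : ℕ, (ℙ (S ⁻¹' {n+1})).toReal * t ^ (n+1) = (q n - q (n+1)) * t ^ (n+1) := by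
    intro n
    rw [hPS n, ENNReal.toReal_ofReal (sub_nonneg.mpr (sibq_dec hα n))]
  have hsg : Summable (fun n => q n - q (n+1)) := by
    apply summable_of_sum_range_le (c := 1)
    · intro n; exact sub_nonneg.2 (sibq_dec hα n)
    · intro n
      rw [Finset.sum_range_sub' q n]
      have h1 : q 0 = 1 := sibq_zero
      have h2 : 0 ≤ q n := sibq_nonneg hα n
      linarith
  have hsf : Summable (fun n : ℕ => (ℙ (S ⁻¹' {n})).toReal * t ^ n) := by
    apply (summable_nat_add_iff (f := fun n : ℕ => (ℙ (S ⁻¹' {n})).toReal * t ^ n) 1).1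
    apply Summable.of_nonneg_of_le _ _ hsg
    · intro n
      rw [hfs n]
      exact mul_nonneg (sub_nonneg.2 (sibq_dec hα n)) (pow_nonneg ht.1 _)
    · intro n
      rw [hfs n]
      exact mul_le_of_le_one_right (sub_nonneg.2 (sibq_dec hα n)) (pow_le_one₀ ht.1 ht.2)
  rw [Summable.tsum_eq_zero_add hsf, hf0, zero_add]
  calc ∑' n : ℕ, (ℙ (S ⁻¹' {n+1})).toReal * t ^ (n+1)
      = ∑' n : ℕ, (q n - q (n+1)) * t ^ (n+1) := tsum_congr hfs
    _ = 1 - (1 - t) ^ α := sib_sum hα sibq_zero (sibq_nonneg hα) (sibq_le_one hα)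
        (sibq_rec) (sibq_dec hα) (sibq_tendsto hα) ht.1 ht.2
end

section
/- Let θ ≥ 1 be a random variable satisfying Davies' condition: x^{−α−γ(x)} ≤ P(θ > x) ≤ x^{−α+γ(x)} for x ≥ x_0, where 0 < α < 1 and γ is nonincreasing, nonnegative, with x ↦ x^{γ(x)} nondecreasing and ∫_{x_0}^∞ γ(exp(e^x)) dx < ∞. Then the function x ↦ x^{γ(x)} is slowly varying at infinity, and there exist random variables θ̲ ≤_{st} θ ≤_{st} θ̄ (stochastic ordering) whose tail functions are regularly varying at infinity with index −α. -/
open MeasureTheory ProbabilityTheory Filter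

/-- `L` is slowly varying at infinity. -/
def SlowlyVarying (L : ℝ → ℝ) : Prop :=
  ∀ c : ℝ, 0 < c → Tendsto (fun x => L (c * x) / L x) atTop (nhds 1)

private lemma integral_Ioi_pow' {p t : ℝ} (hp : 0 < p) (ht : 0 < t) :
    ∫ s in Set.Ioi t, s ^ (-p - 1) = t ^ (-p) / p := by
  rw [integral_Ioi_rpow_of_lt (by linarith) ht, show -p - 1 + 1 = -p by ring,
    neg_div, div_neg, neg_neg]

private lemma tail_withDensity {a : ℝ} {g : ℝ → ℝ} (hg0 : ∀ s ∈ Set.Ioi a, 0 ≤ g s)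
    (hgi : IntegrableOn g (Set.Ioi a)) (t : ℝ) :
    (volume.withDensity ((Set.Ioi a).indicator (fun s => ENNReal.ofReal (g s)))) (Set.Ioi t)
      = ENNReal.ofReal (∫ s in Set.Ioi (max t a), g s) := by
  rw [withDensity_apply _ measurableSet_Ioi, lintegral_indicator measurableSet_Ioi _,
    Measure.restrict_restrict measurableSet_Ioi, Set.Ioi_inter_Ioi, sup_comm,
    ← ofReal_integral_eq_lintegral_ofReal]
  · exact hgi.mono (Set.Ioi_subset_Ioi (le_max_right _ _)) le_rfl
  · exact (ae_restrict_mem measurableSet_Ioi).mono fun s hs =>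
      hg0 s (Set.Ioi_subset_Ioi (le_max_right _ _) hs)

private lemma univ_withDensity {a : ℝ} {g : ℝ → ℝ} (hg0 : ∀ s ∈ Set.Ioi a, 0 ≤ g s)
    (hgi : IntegrableOn g (Set.Ioi a)) :
    (volume.withDensity ((Set.Ioi a).indicator (fun s => ENNReal.ofReal (g s)))) Set.univ
      = ENNReal.ofReal (∫ s in Set.Ioi a, g s) := by
  rw [withDensity_apply _ MeasurableSet.univ, Measure.restrict_univ,
    lintegral_indicator measurableSet_Ioi _, ← ofReal_integral_eq_lintegral_ofReal hgi]
  exact (ae_restrict_mem measurableSet_Ioi).mono hg0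

private lemma ratio_tendsto {a c : ℝ} (hc : 0 < c) {δ : ℝ → ℝ}
    (hδ : Tendsto (fun x => (c * x) ^ (-δ (c * x)) / x ^ (-δ x)) atTop (nhds 1)) :
    Tendsto (fun x => (c * x) ^ (-a - δ (c * x)) / x ^ (-a - δ x)) atTop
      (nhds (c ^ (-a))) := by
  have h := hδ.const_mul (c ^ (-a))
  rw [mul_one] at h
  refine h.congr' ?_
  filter_upwards [eventually_gt_atTop 0] with x hx
  have hcx : (0:ℝ) < c * x := mul_pos hc hx
  have hxne : x ^ (-a) ≠ 0 := (Real.rpow_pos_of_pos hx _).ne'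
  have hmr : (c * x) ^ (-a) = c ^ (-a) * x ^ (-a) := Real.mul_rpow hc.le hx.le
  rw [show -a - δ (c*x) = -a + -δ (c*x) by ring, show -a - δ x = -a + -δ x by ring,
    Real.rpow_add hcx, Real.rpow_add hx, hmr, mul_div_mul_comm,
    mul_div_cancel_right₀ _ hxne]
/-- Let `θ ≥ 1` satisfy Davies' condition `x^{-α-γ(x)} ≤ ℙ(θ > x) ≤ x^{-α+γ(x)}` for
`x ≥ x₀`, with `0 < α < 1`, `γ ≥ 0` nonincreasing, `x ↦ x^{γ(x)}` nondecreasing and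
`∫_{x₀}^∞ γ(exp(eˣ)) dx < ∞`.  Then `x ↦ x^{γ(x)}` is slowly varying at infinity, and
there are probability laws `μl ≤_st law(θ) ≤_st μu` whose tails are regularly varying at
infinity with index `−α` (tail ratios `μ(c·x,∞)/μ(x,∞) → c^{-α}`). -/
theorem stmt15 {Ω : Type*} [MeasureSpace Ω] [IsProbabilityMeasure (ℙ : Measure Ω)]
    (θ : Ω → ℝ) (hθmeas : Measurable θ) (hθ1 : ∀ ω, 1 ≤ θ ω)
    (α : ℝ) (hα : α ∈ Set.Ioo (0 : ℝ) 1)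
    (x₀ : ℝ) (hx₀ : 1 ≤ x₀)
    (γ : ℝ → ℝ) (hγ0 : ∀ x, x₀ ≤ x → 0 ≤ γ x)
    (hγanti : AntitoneOn γ (Set.Ici x₀))
    (hγmono : MonotoneOn (fun x => x ^ γ x) (Set.Ici x₀))
    (hγint : IntegrableOn (fun x => γ (Real.exp (Real.exp x))) (Set.Ioi x₀))
    (hDavies : ∀ x, x₀ ≤ x →
      x ^ (-α - γ x) ≤ (ℙ {ω | x < θ ω}).toReal ∧
      (ℙ {ω | x < θ ω}).toReal ≤ x ^ (-α + γ x)) :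
    SlowlyVarying (fun x => x ^ γ x) ∧
    ∃ μl μu : Measure ℝ, IsProbabilityMeasure μl ∧ IsProbabilityMeasure μu ∧
      (∀ t : ℝ, μl (Set.Ioi t) ≤ ℙ {ω | t < θ ω} ∧
        ℙ {ω | t < θ ω} ≤ μu (Set.Ioi t)) ∧
      (∀ c : ℝ, 0 < c →
        Tendsto (fun x => (μl (Set.Ioi (c * x))).toReal / (μl (Set.Ioi x)).toReal)
          atTop (nhds (c ^ (-α)))) ∧
      (∀ c : ℝ, 0 < c →
        Tendsto (fun x => (μu (Set.Ioi (c * x))).toReal / (μu (Set.Ioi x)).toReal)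
          atTop (nhds (c ^ (-α)))) := by

  obtain ⟨hα0, hα1⟩ := hα
  have hx₀0 : (0:ℝ) < x₀ := lt_of_lt_of_le one_pos hx₀
  -- γ takes arbitrarily small values
  have hsmall : ∀ ε : ℝ, 0 < ε → ∃ T, x₀ ≤ T ∧ γ T ≤ ε := by
    intro ε hε
    by_contra hcon
    push_neg at hcon
    have hfin := hγint.2
    have hle : (ENNReal.ofReal ε) * volume (Set.Ioi x₀)
        ≤ ∫⁻ x in Set.Ioi x₀, ‖γ (Real.exp (Real.exp x))‖ₑ := by
      rw [← setLIntegral_const]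
      refine lintegral_mono_ae ?_
      refine (ae_restrict_mem measurableSet_Ioi).mono fun x hx => ?_
      have hexp : ∀ y : ℝ, y ≤ Real.exp y := fun y => by linarith [Real.add_one_le_exp y]
      have hxe : x₀ ≤ Real.exp (Real.exp x) :=
        le_trans (le_of_lt hx) (le_trans (hexp x) (hexp (Real.exp x)))
      have hgt := hcon _ hxe
      rw [Real.enorm_eq_ofReal (by linarith)]
      exact ENNReal.ofReal_le_ofReal hgt.le
    rw [Real.volume_Ioi, ENNReal.mul_top (ENNReal.ofReal_pos.mpr hε).ne'] at hle
    rw [HasFiniteIntegral, top_le_iff.mp hle] at hfin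
    exact lt_irrefl _ hfin
  -- γ tends to 0 at infinity
  have hγ_to0 : Tendsto γ atTop (nhds 0) := by
    rw [Metric.tendsto_atTop]
    intro ε hε
    obtain ⟨T, hT1, hT2⟩ := hsmall (ε/2) (by linarith)
    refine ⟨T, fun x hx => ?_⟩
    have h0 : 0 ≤ γ x := hγ0 x (hT1.trans hx)
    have h1 : γ x ≤ ε/2 :=
      le_trans (hγanti (Set.mem_Ici.mpr hT1) (Set.mem_Ici.mpr (hT1.trans hx)) hx) hT2
    rw [Real.dist_eq, sub_zero, abs_of_nonneg h0]
    linarith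
  -- slow variation, ratio ≥ 1 case
  have sv1 : ∀ c : ℝ, 1 ≤ c →
      Tendsto (fun x => (c*x) ^ γ (c*x) / x ^ γ x) atTop (nhds 1) := by
    intro c hc
    have hc0 : (0:ℝ) < c := lt_of_lt_of_le one_pos hc
    have hupper : Tendsto (fun x => c ^ γ x) atTop (nhds 1) := by
      have h1 : Tendsto (fun x => Real.log c * γ x) atTop (nhds 0) := by
        simpa using hγ_to0.const_mul (Real.log c)
      have h2 := (Real.continuous_exp.tendsto 0).comp h1
      rw [Real.exp_zero] at h2
      exact h2.congr fun x => (Real.rpow_def_of_pos hc0 (γ x)).symm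
    refine tendsto_of_tendsto_of_tendsto_of_le_of_le' tendsto_const_nhds hupper ?_ ?_
    · filter_upwards [eventually_ge_atTop x₀] with x hx
      have hx1 : (1:ℝ) ≤ x := hx₀.trans hx
      have hx0 : (0:ℝ) < x := lt_of_lt_of_le one_pos hx1
      have hcx : x ≤ c * x := le_mul_of_one_le_left hx0.le hc
      have hmono := hγmono (Set.mem_Ici.mpr hx) (Set.mem_Ici.mpr (hx.trans hcx)) hcx
      exact (one_le_div (Real.rpow_pos_of_pos hx0 _)).mpr hmono
    · filter_upwards [eventually_ge_atTop x₀] with x hx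
      have hx1 : (1:ℝ) ≤ x := hx₀.trans hx
      have hx0 : (0:ℝ) < x := lt_of_lt_of_le one_pos hx1
      have hcx : x ≤ c * x := le_mul_of_one_le_left hx0.le hc
      have hcx1 : (1:ℝ) ≤ c * x := hx1.trans hcx
      have h1 : (c*x) ^ γ (c*x) ≤ (c*x) ^ γ x :=
        Real.rpow_le_rpow_of_exponent_le hcx1
          (hγanti (Set.mem_Ici.mpr hx) (Set.mem_Ici.mpr (hx.trans hcx)) hcx)
      rw [div_le_iff₀ (Real.rpow_pos_of_pos hx0 _)]
      calc (c*x) ^ γ (c*x) ≤ (c*x) ^ γ x := h1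
        _ = c ^ γ x * x ^ γ x := Real.mul_rpow hc0.le hx0.le
  have hsv : SlowlyVarying (fun x => x ^ γ x) := by
    intro c hc
    show Tendsto (fun x => (c*x) ^ γ (c*x) / x ^ γ x) atTop (nhds 1)
    rcases le_or_gt 1 c with h1c | h1c
    · exact sv1 c h1c
    · have hinv : (1:ℝ) ≤ c⁻¹ := (one_le_inv₀ hc).mpr h1c.le
      have hmul : Tendsto (fun x : ℝ => c * x) atTop atTop := tendsto_id.const_mul_atTop hc
      have hcomp := (sv1 c⁻¹ hinv).comp hmul
      have heq : ((fun x => (c⁻¹*x) ^ γ (c⁻¹*x) / x ^ γ x) ∘ (fun x => c * x))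
          = fun x => x ^ γ x / (c*x) ^ γ (c*x) := by
        funext x
        simp only [Function.comp_apply]
        rw [inv_mul_cancel_left₀ (ne_of_gt hc)]
      rw [heq] at hcomp
      have hinv2 := hcomp.inv₀ one_ne_zero
      rw [inv_one] at hinv2
      exact hinv2.congr fun x => inv_div _ _
  refine ⟨hsv, ?_⟩
  -- threshold T
  obtain ⟨T₁, hT₁x, hT₁γ⟩ := hsmall (α/2) (by linarith)
  obtain ⟨T, hTdef⟩ : ∃ T : ℝ, T = max T₁ (2 ^ (2/α)) := ⟨_, rfl⟩
  have hTx₀ : x₀ ≤ T := hTdef ▸ hT₁x.trans (le_max_left _ _)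
  have hT1 : (1:ℝ) ≤ T := hx₀.trans hTx₀
  have hT0 : (0:ℝ) < T := lt_of_lt_of_le one_pos hT1
  have hTγ : γ T ≤ α/2 := by
    refine le_trans (hγanti (Set.mem_Ici.mpr hT₁x) (Set.mem_Ici.mpr hTx₀) ?_) hT₁γ
    rw [hTdef]; exact le_max_left _ _
  have hT2 : (2:ℝ) ^ (2/α) ≤ T := hTdef ▸ le_max_right _ _
  -- measurable globalization of γ
  obtain ⟨γ', hγ'def⟩ : ∃ g : ℝ → ℝ, g = fun x => γ (max x x₀) := ⟨_, rfl⟩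
  have hγ'anti : Antitone γ' := by
    intro x y hxy
    simp only [hγ'def]
    exact hγanti (Set.mem_Ici.mpr (le_max_right x x₀)) (Set.mem_Ici.mpr (le_max_right y x₀))
      (max_le_max hxy le_rfl)
  have hγ'meas : Measurable γ' := hγ'anti.measurable
  have hγ'eq : ∀ s : ℝ, x₀ ≤ s → γ' s = γ s := fun s hs => by
    simp only [hγ'def, max_eq_left hs]
  have hγ'0 : ∀ s : ℝ, 0 ≤ γ' s := fun s => by
    simp only [hγ'def]; exact hγ0 _ (le_max_right _ _)
  have hγ'le : ∀ t s : ℝ, x₀ ≤ t → t ≤ s → γ' s ≤ γ t := by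
    intro t s ht hts
    rw [hγ'eq s (ht.trans hts)]
    exact hγanti (Set.mem_Ici.mpr ht) (Set.mem_Ici.mpr (ht.trans hts)) hts
  -- densities
  obtain ⟨fl, hfldef⟩ : ∃ f : ℝ → ℝ, f = fun s => α * s ^ (-α - 1 - γ' s) := ⟨_, rfl⟩
  obtain ⟨fu, hfudef⟩ : ∃ f : ℝ → ℝ, f = fun s => α * s ^ (-α - 1 + γ' s) := ⟨_, rfl⟩
  have hflmeas : Measurable fl := by
    rw [hfldef]; exact measurable_const.mul (measurable_id.pow (measurable_const.sub hγ'meas))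
  have hfumeas : Measurable fu := by
    rw [hfudef]; exact measurable_const.mul (measurable_id.pow (measurable_const.add hγ'meas))
  have hfl0 : ∀ s ∈ Set.Ioi x₀, 0 ≤ fl s := fun s hs => by
    rw [hfldef]
    exact mul_nonneg hα0.le (Real.rpow_nonneg (le_of_lt (lt_trans hx₀0 hs)) _)
  have hfu0 : ∀ s ∈ Set.Ioi T, 0 ≤ fu s := fun s hs => by
    rw [hfudef]
    exact mul_nonneg hα0.le (Real.rpow_nonneg (le_of_lt (lt_trans hT0 hs)) _)
  -- integrability
  have hIl : ∀ b : ℝ, x₀ ≤ b → IntegrableOn fl (Set.Ioi b) := by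
    intro b hb
    have hb0 : (0:ℝ) < b := lt_of_lt_of_le hx₀0 hb
    have hb1 : (1:ℝ) ≤ b := hx₀.trans hb
    refine Integrable.mono'
      ((integrableOn_Ioi_rpow_of_lt (show -α - 1 < -1 by linarith) hb0).const_mul α)
      hflmeas.aestronglyMeasurable ?_
    filter_upwards [ae_restrict_mem measurableSet_Ioi] with s hs
    have hs1 : (1:ℝ) ≤ s := hb1.trans (le_of_lt hs)
    have hs0 : (0:ℝ) < s := lt_of_lt_of_le one_pos hs1
    rw [hfldef, Real.norm_eq_abs, abs_of_nonneg (mul_nonneg hα0.le (Real.rpow_nonneg hs0.le _))]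
    exact mul_le_mul_of_nonneg_left
      (Real.rpow_le_rpow_of_exponent_le hs1 (by linarith [hγ'0 s])) hα0.le
  have hIu : ∀ b : ℝ, T ≤ b → IntegrableOn fu (Set.Ioi b) := by
    intro b hb
    have hb0 : (0:ℝ) < b := lt_of_lt_of_le hT0 hb
    have hb1 : (1:ℝ) ≤ b := hT1.trans hb
    refine Integrable.mono'
      ((integrableOn_Ioi_rpow_of_lt (show -(α/2) - 1 < -1 by linarith) hb0).const_mul α)
      hfumeas.aestronglyMeasurable ?_
    filter_upwards [ae_restrict_mem measurableSet_Ioi] with s hs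
    have hs1 : (1:ℝ) ≤ s := hb1.trans (le_of_lt hs)
    have hs0 : (0:ℝ) < s := lt_of_lt_of_le one_pos hs1
    have hγs : γ' s ≤ α/2 :=
      le_trans (hγ'le T s hTx₀ (hb.trans (le_of_lt hs))) hTγ
    rw [hfudef, Real.norm_eq_abs, abs_of_nonneg (mul_nonneg hα0.le (Real.rpow_nonneg hs0.le _))]
    exact mul_le_mul_of_nonneg_left
      (Real.rpow_le_rpow_of_exponent_le hs1 (by linarith)) hα0.le
  -- tail integral bounds
  have hRl_ub : ∀ t : ℝ, x₀ ≤ t → (∫ s in Set.Ioi t, fl s) ≤ t ^ (-α - γ t) := by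
    intro t ht
    have ht0 : (0:ℝ) < t := lt_of_lt_of_le hx₀0 ht
    have hint2 : IntegrableOn (fun s : ℝ => (α * t ^ (-γ t)) * s ^ (-α - 1)) (Set.Ioi t) :=
      (integrableOn_Ioi_rpow_of_lt (show -α - 1 < -1 by linarith) ht0).const_mul _
    have hbound : ∀ s ∈ Set.Ioi t, fl s ≤ (α * t ^ (-γ t)) * s ^ (-α - 1) := by
      intro s hs
      have hts : t ≤ s := le_of_lt hs
      have hs0 : (0:ℝ) < s := lt_of_lt_of_le ht0 hts
      have h2 : s ^ (-γ' s) ≤ t ^ (-γ t) := by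
        rw [Real.rpow_neg hs0.le, Real.rpow_neg ht0.le]
        refine inv_anti₀ (Real.rpow_pos_of_pos ht0 _) ?_
        rw [hγ'eq s (ht.trans hts)]
        exact hγmono (Set.mem_Ici.mpr ht) (Set.mem_Ici.mpr (ht.trans hts)) hts
      have h1 : fl s = (α * s ^ (-α - 1)) * s ^ (-γ' s) := by
        simp only [hfldef]
        rw [show -α - 1 - γ' s = -α - 1 + -γ' s by ring, Real.rpow_add hs0]
        ring
      rw [h1]
      calc (α * s ^ (-α-1)) * s ^ (-γ' s) ≤ (α * s ^ (-α-1)) * t ^ (-γ t) :=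
            mul_le_mul_of_nonneg_left h2 (mul_nonneg hα0.le (Real.rpow_nonneg hs0.le _))
        _ = (α * t ^ (-γ t)) * s ^ (-α-1) := by ring
    calc (∫ s in Set.Ioi t, fl s) ≤ ∫ s in Set.Ioi t, (α * t ^ (-γ t)) * s ^ (-α-1) :=
          setIntegral_mono_on (hIl t ht) hint2 measurableSet_Ioi hbound
      _ = (α * t ^ (-γ t)) * (t ^ (-α) / α) := by
          rw [integral_const_mul, integral_Ioi_pow' hα0 ht0]
      _ = t ^ (-γ t) * t ^ (-α) := by field_simp
      _ = t ^ (-α - γ t) := by rw [← Real.rpow_add ht0]; congr 1; ring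
  have hRl_lb : ∀ t : ℝ, x₀ ≤ t →
      (α / (α + γ t)) * t ^ (-α - γ t) ≤ ∫ s in Set.Ioi t, fl s := by
    intro t ht
    have ht0 : (0:ℝ) < t := lt_of_lt_of_le hx₀0 ht
    have ht1 : (1:ℝ) ≤ t := hx₀.trans ht
    have hγt0 : 0 ≤ γ t := hγ0 t ht
    have hp : (0:ℝ) < α + γ t := by linarith
    have hint2 : IntegrableOn (fun s : ℝ => α * s ^ (-(α + γ t) - 1)) (Set.Ioi t) :=
      (integrableOn_Ioi_rpow_of_lt (show -(α + γ t) - 1 < -1 by linarith) ht0).const_mul _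
    have hbound : ∀ s ∈ Set.Ioi t, α * s ^ (-(α + γ t) - 1) ≤ fl s := by
      intro s hs
      have hts : t ≤ s := le_of_lt hs
      have hs1 : (1:ℝ) ≤ s := ht1.trans hts
      simp only [hfldef]
      exact mul_le_mul_of_nonneg_left
        (Real.rpow_le_rpow_of_exponent_le hs1 (by linarith [hγ'le t s ht hts])) hα0.le
    calc (α / (α + γ t)) * t ^ (-α - γ t)
        = α * (t ^ (-(α + γ t)) / (α + γ t)) := by
          rw [show -α - γ t = -(α + γ t) by ring]; ring
      _ = ∫ s in Set.Ioi t, α * s ^ (-(α + γ t) - 1) := by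
          rw [integral_const_mul, integral_Ioi_pow' hp ht0]
      _ ≤ ∫ s in Set.Ioi t, fl s :=
          setIntegral_mono_on hint2 (hIl t ht) measurableSet_Ioi hbound
  have hRu_lb : ∀ t : ℝ, T ≤ t → t ^ (-α + γ t) ≤ ∫ s in Set.Ioi t, fu s := by
    intro t ht
    have htx : x₀ ≤ t := hTx₀.trans ht
    have ht0 : (0:ℝ) < t := lt_of_lt_of_le hx₀0 htx
    have hint2 : IntegrableOn (fun s : ℝ => (α * t ^ γ t) * s ^ (-α - 1)) (Set.Ioi t) :=
      (integrableOn_Ioi_rpow_of_lt (show -α - 1 < -1 by linarith) ht0).const_mul _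
    have hbound : ∀ s ∈ Set.Ioi t, (α * t ^ γ t) * s ^ (-α - 1) ≤ fu s := by
      intro s hs
      have hts : t ≤ s := le_of_lt hs
      have hs0 : (0:ℝ) < s := lt_of_lt_of_le ht0 hts
      have h2 : t ^ γ t ≤ s ^ (γ' s) := by
        rw [hγ'eq s (htx.trans hts)]
        exact hγmono (Set.mem_Ici.mpr htx) (Set.mem_Ici.mpr (htx.trans hts)) hts
      have h1 : fu s = (α * s ^ (-α - 1)) * s ^ (γ' s) := by
        simp only [hfudef]
        rw [Real.rpow_add hs0]
        ring
      rw [h1]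
      calc (α * t ^ γ t) * s ^ (-α-1) = (α * s ^ (-α-1)) * t ^ γ t := by ring
        _ ≤ (α * s ^ (-α-1)) * s ^ (γ' s) :=
          mul_le_mul_of_nonneg_left h2 (mul_nonneg hα0.le (Real.rpow_nonneg hs0.le _))
    calc t ^ (-α + γ t) = t ^ γ t * t ^ (-α) := by
          rw [← Real.rpow_add ht0]; congr 1; ring
      _ = (α * t ^ γ t) * (t ^ (-α) / α) := by field_simp
      _ = ∫ s in Set.Ioi t, (α * t ^ γ t) * s ^ (-α - 1) := by
          rw [integral_const_mul, integral_Ioi_pow' hα0 ht0]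
      _ ≤ ∫ s in Set.Ioi t, fu s :=
          setIntegral_mono_on hint2 (hIu t ht) measurableSet_Ioi hbound
  have hRu_ub : ∀ t : ℝ, T ≤ t →
      (∫ s in Set.Ioi t, fu s) ≤ (α / (α - γ t)) * t ^ (-α + γ t) := by
    intro t ht
    have htx : x₀ ≤ t := hTx₀.trans ht
    have ht0 : (0:ℝ) < t := lt_of_lt_of_le hx₀0 htx
    have ht1 : (1:ℝ) ≤ t := hx₀.trans htx
    have hγt : γ t ≤ α/2 := le_trans (hγanti (Set.mem_Ici.mpr hTx₀) (Set.mem_Ici.mpr htx) ht) hTγ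
    have hp : (0:ℝ) < α - γ t := by linarith
    have hint2 : IntegrableOn (fun s : ℝ => α * s ^ (-(α - γ t) - 1)) (Set.Ioi t) :=
      (integrableOn_Ioi_rpow_of_lt (show -(α - γ t) - 1 < -1 by linarith) ht0).const_mul _
    have hbound : ∀ s ∈ Set.Ioi t, fu s ≤ α * s ^ (-(α - γ t) - 1) := by
      intro s hs
      have hts : t ≤ s := le_of_lt hs
      have hs1 : (1:ℝ) ≤ s := ht1.trans hts
      simp only [hfudef]
      exact mul_le_mul_of_nonneg_left
        (Real.rpow_le_rpow_of_exponent_le hs1 (by linarith [hγ'le t s htx hts])) hα0.le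
    calc (∫ s in Set.Ioi t, fu s) ≤ ∫ s in Set.Ioi t, α * s ^ (-(α - γ t) - 1) :=
          setIntegral_mono_on (hIu t ht) hint2 measurableSet_Ioi hbound
      _ = α * (t ^ (-(α - γ t)) / (α - γ t)) := by
          rw [integral_const_mul, integral_Ioi_pow' hp ht0]
      _ = (α / (α - γ t)) * t ^ (-α + γ t) := by
          rw [show -(α - γ t) = -α + γ t by ring]; ring
  have hRl_pos : ∀ t : ℝ, x₀ ≤ t → 0 < ∫ s in Set.Ioi t, fl s := by
    intro t ht
    have ht0 : (0:ℝ) < t := lt_of_lt_of_le hx₀0 ht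
    refine lt_of_lt_of_le ?_ (hRl_lb t ht)
    exact mul_pos (div_pos hα0 (by linarith [hγ0 t ht])) (Real.rpow_pos_of_pos ht0 _)
  have hRu_pos : ∀ t : ℝ, T ≤ t → 0 < ∫ s in Set.Ioi t, fu s := by
    intro t ht
    have ht0 : (0:ℝ) < t := lt_of_lt_of_le hT0 ht
    exact lt_of_lt_of_le (Real.rpow_pos_of_pos ht0 _) (hRu_lb t ht)
  -- lower measure
  obtain ⟨νl, hνldef⟩ : ∃ ν : Measure ℝ,
      ν = volume.withDensity ((Set.Ioi x₀).indicator fun s => ENNReal.ofReal (fl s)) := ⟨_, rfl⟩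
  have hνl_tail : ∀ t : ℝ, νl (Set.Ioi t) = ENNReal.ofReal (∫ s in Set.Ioi (max t x₀), fl s) :=
    fun t => by rw [hνldef]; exact tail_withDensity hfl0 (hIl x₀ le_rfl) t
  obtain ⟨ml, hmldef⟩ : ∃ m : ENNReal, m = ENNReal.ofReal (∫ s in Set.Ioi x₀, fl s) := ⟨_, rfl⟩
  have hνl_univ : νl Set.univ = ml := by
    rw [hνldef, hmldef]; exact univ_withDensity hfl0 (hIl x₀ le_rfl)
  have hml_le1 : ml ≤ 1 := by
    rw [hmldef, ENNReal.ofReal_le_one]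
    exact (hRl_ub x₀ le_rfl).trans
      (Real.rpow_le_one_of_one_le_of_nonpos hx₀ (by linarith [hγ0 x₀ le_rfl]))
  obtain ⟨μl, hμldef⟩ : ∃ μ : Measure ℝ,
      μ = νl + ((1 : ENNReal) - ml) • Measure.dirac 0 := ⟨_, rfl⟩
  have hμl_tail : ∀ t : ℝ, 1 ≤ t →
      μl (Set.Ioi t) = ENNReal.ofReal (∫ s in Set.Ioi (max t x₀), fl s) := by
    intro t ht
    rw [hμldef, Measure.add_apply, Measure.smul_apply, smul_eq_mul,
      Measure.dirac_apply' _ measurableSet_Ioi,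
      Set.indicator_of_notMem (by simp only [Set.mem_Ioi, not_lt]; linarith),
      mul_zero, add_zero, hνl_tail]
  have hμl_prob : IsProbabilityMeasure μl := by
    constructor
    rw [hμldef, Measure.add_apply, Measure.smul_apply, smul_eq_mul, hνl_univ,
      measure_univ, mul_one]
    exact add_tsub_cancel_of_le hml_le1
  have hcompl : ∀ t : ℝ, μl (Set.Ioi t) ≤ ℙ {ω | t < θ ω} := by
    intro t
    rcases lt_or_ge t 1 with ht | ht
    · have huniv : {ω | t < θ ω} = Set.univ :=
        Set.eq_univ_of_forall fun ω => lt_of_lt_of_le ht (hθ1 ω)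
      rw [huniv, measure_univ]
      haveI := hμl_prob
      exact prob_le_one
    · rw [hμl_tail t ht]
      have hu : x₀ ≤ max t x₀ := le_max_right _ _
      have hd := (hDavies (max t x₀) hu).1
      calc ENNReal.ofReal (∫ s in Set.Ioi (max t x₀), fl s)
          ≤ ENNReal.ofReal ((max t x₀) ^ (-α - γ (max t x₀))) :=
            ENNReal.ofReal_le_ofReal (hRl_ub _ hu)
        _ ≤ ℙ {ω | max t x₀ < θ ω} := by
            rw [← ENNReal.ofReal_toReal (measure_ne_top ℙ _)]
            exact ENNReal.ofReal_le_ofReal hd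
        _ ≤ ℙ {ω | t < θ ω} :=
            measure_mono fun ω hω => lt_of_le_of_lt (le_max_left t x₀) hω
  -- upper measure
  obtain ⟨νu, hνudef⟩ : ∃ ν : Measure ℝ,
      ν = volume.withDensity ((Set.Ioi T).indicator fun s => ENNReal.ofReal (fu s)) := ⟨_, rfl⟩
  have hνu_tail : ∀ t : ℝ, νu (Set.Ioi t) = ENNReal.ofReal (∫ s in Set.Ioi (max t T), fu s) :=
    fun t => by rw [hνudef]; exact tail_withDensity hfu0 (hIu T le_rfl) t
  obtain ⟨mu, hmudef⟩ : ∃ m : ENNReal, m = ENNReal.ofReal (∫ s in Set.Ioi T, fu s) := ⟨_, rfl⟩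
  have hνu_univ : νu Set.univ = mu := by
    rw [hνudef, hmudef]; exact univ_withDensity hfu0 (hIu T le_rfl)
  have hmu_le1 : mu ≤ 1 := by
    rw [hmudef, ENNReal.ofReal_le_one]
    have h2T : (2:ℝ) ≤ T ^ (α/2) := by
      have h := Real.rpow_le_rpow (Real.rpow_nonneg (by norm_num) _) hT2
        (by linarith : (0:ℝ) ≤ α/2)
      rwa [← Real.rpow_mul (by norm_num : (0:ℝ) ≤ 2),
        show (2/α) * (α/2) = 1 by field_simp, Real.rpow_one] at h
    have hTneg : T ^ (-(α/2)) ≤ 2⁻¹ := by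
      rw [Real.rpow_neg hT0.le]
      exact inv_anti₀ (by norm_num) h2T
    calc (∫ s in Set.Ioi T, fu s) ≤ (α / (α - γ T)) * T ^ (-α + γ T) := hRu_ub T le_rfl
      _ ≤ 2 * T ^ (-(α/2)) := by
          refine mul_le_mul ?_ (Real.rpow_le_rpow_of_exponent_le hT1 (by linarith)) ?_ (by norm_num)
          · rw [div_le_iff₀ (by linarith : (0:ℝ) < α - γ T)]
            linarith [hγ0 T hTx₀]
          · exact Real.rpow_nonneg hT0.le _
      _ ≤ 2 * 2⁻¹ := by linarith
      _ = 1 := by norm_num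
  obtain ⟨μu, hμudef⟩ : ∃ μ : Measure ℝ,
      μ = νu + ((1 : ENNReal) - mu) • Measure.dirac T := ⟨_, rfl⟩
  have hμu_tail : ∀ t : ℝ, T ≤ t →
      μu (Set.Ioi t) = ENNReal.ofReal (∫ s in Set.Ioi t, fu s) := by
    intro t ht
    rw [hμudef, Measure.add_apply, Measure.smul_apply, smul_eq_mul,
      Measure.dirac_apply' _ measurableSet_Ioi,
      Set.indicator_of_notMem (by simp only [Set.mem_Ioi, not_lt]; exact ht),
      mul_zero, add_zero, hνu_tail, max_eq_left ht]
  have hμu_one : ∀ t : ℝ, t < T → μu (Set.Ioi t) = 1 := by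
    intro t ht
    rw [hμudef, Measure.add_apply, Measure.smul_apply, smul_eq_mul,
      Measure.dirac_apply' _ measurableSet_Ioi,
      Set.indicator_of_mem (Set.mem_Ioi.mpr ht), hνu_tail, max_eq_right ht.le,
      Pi.one_apply, mul_one, ← hmudef]
    exact add_tsub_cancel_of_le hmu_le1
  have hμu_prob : IsProbabilityMeasure μu := by
    constructor
    rw [hμudef, Measure.add_apply, Measure.smul_apply, smul_eq_mul, hνu_univ,
      measure_univ, mul_one]
    exact add_tsub_cancel_of_le hmu_le1
  have hcompu : ∀ t : ℝ, ℙ {ω | t < θ ω} ≤ μu (Set.Ioi t) := by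
    intro t
    rcases lt_or_ge t T with ht | ht
    · rw [hμu_one t ht]
      exact prob_le_one
    · rw [hμu_tail t ht]
      have htx : x₀ ≤ t := hTx₀.trans ht
      have hd := (hDavies t htx).2
      calc ℙ {ω | t < θ ω} = ENNReal.ofReal ((ℙ {ω | t < θ ω}).toReal) :=
            (ENNReal.ofReal_toReal (measure_ne_top ℙ _)).symm
        _ ≤ ENNReal.ofReal (t ^ (-α + γ t)) := ENNReal.ofReal_le_ofReal hd
        _ ≤ ENNReal.ofReal (∫ s in Set.Ioi t, fu s) := ENNReal.ofReal_le_ofReal (hRu_lb t ht)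
  -- ratio limits
  have hmulat : ∀ c : ℝ, 0 < c → Tendsto (fun x : ℝ => c * x) atTop atTop :=
    fun c hc => tendsto_id.const_mul_atTop hc
  have hγcx : ∀ c : ℝ, 0 < c → Tendsto (fun x => γ (c * x)) atTop (nhds 0) :=
    fun c hc => hγ_to0.comp (hmulat c hc)
  have hEl : ∀ c : ℝ, 0 < c → Tendsto
      (fun x => (c*x) ^ (-α - γ (c*x)) / x ^ (-α - γ x)) atTop (nhds (c ^ (-α))) := by
    intro c hc
    refine ratio_tendsto hc ?_
    have h := (hsv c hc).inv₀ one_ne_zero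
    rw [inv_one] at h
    refine h.congr' ?_
    filter_upwards [eventually_gt_atTop 0] with x hx
    have hcx0 : (0:ℝ) < c * x := mul_pos hc hx
    show ((c*x) ^ γ (c*x) / x ^ γ x)⁻¹ = (c*x) ^ (-γ (c*x)) / x ^ (-γ x)
    rw [inv_div, Real.rpow_neg hcx0.le, Real.rpow_neg hx.le, inv_div_inv]
  have hEu : ∀ c : ℝ, 0 < c → Tendsto
      (fun x => (c*x) ^ (-α + γ (c*x)) / x ^ (-α + γ x)) atTop (nhds (c ^ (-α))) := by
    intro c hc
    have hδu : Tendsto (fun x => (c*x) ^ (-(-γ (c*x))) / x ^ (-(-γ x))) atTop (nhds 1) := by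
      refine (hsv c hc).congr fun x => ?_
      show (c*x) ^ γ (c*x) / x ^ γ x = _
      rw [neg_neg, neg_neg]
    have h2 := ratio_tendsto (a := α) (δ := fun x => -γ x) hc hδu
    refine h2.congr fun x => ?_
    rw [show -α - -γ (c*x) = -α + γ (c*x) by ring, show -α - -γ x = -α + γ x by ring]
  have hfac : ∀ g : ℝ → ℝ, Tendsto g atTop (nhds 0) →
      Tendsto (fun x => α / (α + g x)) atTop (nhds 1) := by
    intro g hg
    have h := (tendsto_const_nhds : Tendsto (fun _ : ℝ => α) atTop (nhds α)).div
      ((tendsto_const_nhds : Tendsto (fun _ : ℝ => α) atTop (nhds α)).add hg)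
      (by rw [add_zero]; exact hα0.ne')
    rw [add_zero, div_self hα0.ne'] at h
    exact h
  have hfac' : ∀ g : ℝ → ℝ, Tendsto g atTop (nhds 0) →
      Tendsto (fun x => α / (α - g x)) atTop (nhds 1) := by
    intro g hg
    have h := (tendsto_const_nhds : Tendsto (fun _ : ℝ => α) atTop (nhds α)).div
      ((tendsto_const_nhds : Tendsto (fun _ : ℝ => α) atTop (nhds α)).sub hg)
      (by rw [sub_zero]; exact hα0.ne')
    rw [sub_zero, div_self hα0.ne'] at h
    exact h
  have hlimL : ∀ c : ℝ, 0 < c →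
      Tendsto (fun x => (μl (Set.Ioi (c * x))).toReal / (μl (Set.Ioi x)).toReal)
        atTop (nhds (c ^ (-α))) := by
    intro c hc
    have hev : ∀ᶠ x : ℝ in atTop, x₀ ≤ x ∧ (1:ℝ) ≤ x ∧ x₀ ≤ c * x ∧ (1:ℝ) ≤ c * x := by
      filter_upwards [eventually_ge_atTop x₀, eventually_ge_atTop 1,
        (hmulat c hc).eventually_ge_atTop x₀, (hmulat c hc).eventually_ge_atTop 1]
        with x h1 h2 h3 h4
      exact ⟨h1, h2, h3, h4⟩
    have hlo : Tendsto
        (fun x => (α / (α + γ (c*x)) * ((c*x) ^ (-α - γ (c*x)))) / x ^ (-α - γ x))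
        atTop (nhds (c ^ (-α))) := by
      have h := (hfac _ (hγcx c hc)).mul (hEl c hc)
      rw [one_mul] at h
      exact h.congr fun x => (mul_div_assoc _ _ _).symm
    have hhi : Tendsto
        (fun x => ((c*x) ^ (-α - γ (c*x))) / (α / (α + γ x) * x ^ (-α - γ x)))
        atTop (nhds (c ^ (-α))) := by
      have h := (hEl c hc).div (hfac _ hγ_to0) one_ne_zero
      rw [div_one] at h
      exact h.congr fun x => (div_mul_eq_div_div_swap _ _ _).symm
    refine tendsto_of_tendsto_of_tendsto_of_le_of_le' hlo hhi ?_ ?_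
    · filter_upwards [hev] with x hx
      obtain ⟨h1, h2, h3, h4⟩ := hx
      rw [hμl_tail x h2, hμl_tail _ h4, max_eq_left h1, max_eq_left h3,
        ENNReal.toReal_ofReal (hRl_pos x h1).le, ENNReal.toReal_ofReal (hRl_pos _ h3).le]
      exact div_le_div₀ (hRl_pos _ h3).le (hRl_lb _ h3) (hRl_pos x h1) (hRl_ub x h1)
    · filter_upwards [hev] with x hx
      obtain ⟨h1, h2, h3, h4⟩ := hx
      have hx0 : (0:ℝ) < x := lt_of_lt_of_le one_pos h2
      have hcx0 : (0:ℝ) < c * x := lt_of_lt_of_le one_pos h4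
      rw [hμl_tail x h2, hμl_tail _ h4, max_eq_left h1, max_eq_left h3,
        ENNReal.toReal_ofReal (hRl_pos x h1).le, ENNReal.toReal_ofReal (hRl_pos _ h3).le]
      refine div_le_div₀ (Real.rpow_nonneg hcx0.le _) (hRl_ub _ h3) ?_ (hRl_lb x h1)
      exact mul_pos (div_pos hα0 (by linarith [hγ0 x h1])) (Real.rpow_pos_of_pos hx0 _)
  have hlimU : ∀ c : ℝ, 0 < c →
      Tendsto (fun x => (μu (Set.Ioi (c * x))).toReal / (μu (Set.Ioi x)).toReal)
        atTop (nhds (c ^ (-α))) := by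
    intro c hc
    have hev : ∀ᶠ x : ℝ in atTop, T ≤ x ∧ T ≤ c * x := by
      filter_upwards [eventually_ge_atTop T, (hmulat c hc).eventually_ge_atTop T] with x h1 h2
      exact ⟨h1, h2⟩
    have hlo : Tendsto
        (fun x => ((c*x) ^ (-α + γ (c*x))) / (α / (α - γ x) * x ^ (-α + γ x)))
        atTop (nhds (c ^ (-α))) := by
      have h := (hEu c hc).div (hfac' _ hγ_to0) one_ne_zero
      rw [div_one] at h
      exact h.congr fun x => (div_mul_eq_div_div_swap _ _ _).symm
    have hhi : Tendsto
        (fun x => (α / (α - γ (c*x)) * ((c*x) ^ (-α + γ (c*x)))) / x ^ (-α + γ x))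
        atTop (nhds (c ^ (-α))) := by
      have h := (hfac' _ (hγcx c hc)).mul (hEu c hc)
      rw [one_mul] at h
      exact h.congr fun x => (mul_div_assoc _ _ _).symm
    refine tendsto_of_tendsto_of_tendsto_of_le_of_le' hlo hhi ?_ ?_
    · filter_upwards [hev] with x hx
      obtain ⟨h1, h2⟩ := hx
      rw [hμu_tail x h1, hμu_tail _ h2,
        ENNReal.toReal_ofReal (hRu_pos x h1).le, ENNReal.toReal_ofReal (hRu_pos _ h2).le]
      exact div_le_div₀ (hRu_pos _ h2).le (hRu_lb _ h2) (hRu_pos x h1) (hRu_ub x h1)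
    · filter_upwards [hev] with x hx
      obtain ⟨h1, h2⟩ := hx
      have hx0 : (0:ℝ) < x := lt_of_lt_of_le hT0 h1
      have hcx0 : (0:ℝ) < c * x := lt_of_lt_of_le hT0 h2
      have hγcx2 : γ (c*x) ≤ α/2 := le_trans (hγanti (Set.mem_Ici.mpr hTx₀)
        (Set.mem_Ici.mpr (hTx₀.trans h2)) h2) hTγ
      rw [hμu_tail x h1, hμu_tail _ h2,
        ENNReal.toReal_ofReal (hRu_pos x h1).le, ENNReal.toReal_ofReal (hRu_pos _ h2).le]
      refine div_le_div₀ ?_ (hRu_ub _ h2) (Real.rpow_pos_of_pos hx0 _) (hRu_lb x h1)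
      exact mul_nonneg (div_nonneg hα0.le (by linarith)) (Real.rpow_nonneg hcx0.le _)
  exact ⟨μl, μu, hμl_prob, hμu_prob, fun t => ⟨hcompl t, hcompu t⟩, hlimL, hlimU⟩
end
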